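/- Let n ≥ 1, r > 0, and let S ⊆ ℝⁿ be a Lebesgue measurable set whose Lebesgue measure equals the Lebesgue measure of the closed Euclidean ball B(0, r) of radius r centered at the origin. Then ∫_S ‖x‖² dx ≥ ∫_{B(0,r)} ‖x‖² dx; that is, among all measurable sets of a given volume, the ball centered at the origin minimizes the second moment. -/

import Mathlib

open MeasureTheory

/-- Among all measurable subsets of `ℝⁿ` with the same volume as the ball `B(0,r)`, the
ball minimizes the second moment `∫ ‖x‖²`. -/
theorem stmt_10 (n : ℕ) (hn : 1 ≤ n) (r : ℝ) (hr : 0 < r)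
    (S : Set (EuclideanSpace ℝ (Fin n))) (hS : MeasurableSet S)
    (hvol : volume S = volume (Metric.closedBall (0 : EuclideanSpace ℝ (Fin n)) r)) :
    ∫⁻ x in Metric.closedBall (0 : EuclideanSpace ℝ (Fin n)) r, ENNReal.ofReal (‖x‖ ^ 2) ≤
      ∫⁻ x in S, ENNReal.ofReal (‖x‖ ^ 2) := by
  set B := Metric.closedBall (0 : EuclideanSpace ℝ (Fin n)) r with hB
  set f : EuclideanSpace ℝ (Fin n) → ENNReal := fun x => ENNReal.ofReal (‖x‖ ^ 2) with hf
  have hBmeas : MeasurableSet B := measurableSet_closedBall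
  have hBfin : volume B ≠ ⊤ := (measure_closedBall_lt_top).ne
  -- measures of the symmetric difference pieces are equal
  have hinterfin : volume (B ∩ S) ≠ ⊤ :=
    ((measure_mono Set.inter_subset_left).trans_lt measure_closedBall_lt_top).ne
  have hdiff : volume (B \ S) = volume (S \ B) := by
    have h1 : volume (B \ S) + volume (B ∩ S) = volume B := measure_diff_add_inter _ hS
    have h2 : volume (S \ B) + volume (S ∩ B) = volume S := measure_diff_add_inter _ hBmeas
    rw [Set.inter_comm] at h2
    have := h1.trans (hvol ▸ h2.symm)
    exact (ENNReal.add_left_inj hinterfin).mp this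
  -- bounds
  have hle1 : ∫⁻ x in B \ S, f x ≤ ENNReal.ofReal (r ^ 2) * volume (B \ S) := by
    rw [← setLIntegral_const]
    refine setLIntegral_mono' (hBmeas.diff hS) fun x hx => ?_
    apply ENNReal.ofReal_le_ofReal
    have : ‖x‖ ≤ r := by simpa using Metric.mem_closedBall.mp hx.1
    exact pow_le_pow_left₀ (norm_nonneg _) this 2
  have hle2 : ENNReal.ofReal (r ^ 2) * volume (S \ B) ≤ ∫⁻ x in S \ B, f x := by
    rw [← setLIntegral_const]
    refine setLIntegral_mono' (hS.diff hBmeas) fun x hx => ?_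
    apply ENNReal.ofReal_le_ofReal
    have : r ≤ ‖x‖ := by
      have := hx.2
      simp only [hB, Metric.mem_closedBall, dist_zero_right, not_le] at this
      exact this.le
    exact pow_le_pow_left₀ hr.le this 2
  calc ∫⁻ x in B, f x = ∫⁻ x in B ∩ S, f x ∂volume + ∫⁻ x in B \ S, f x ∂volume :=
        (lintegral_inter_add_diff f B hS).symm
    _ ≤ ∫⁻ x in B ∩ S, f x ∂volume + ∫⁻ x in S \ B, f x ∂volume := by
        gcongr _ + ?_
        calc ∫⁻ x in B \ S, f x ≤ ENNReal.ofReal (r ^ 2) * volume (B \ S) := hle1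
          _ = ENNReal.ofReal (r ^ 2) * volume (S \ B) := by rw [hdiff]
          _ ≤ ∫⁻ x in S \ B, f x := hle2
    _ = ∫⁻ x in S ∩ B, f x ∂volume + ∫⁻ x in S \ B, f x ∂volume := by rw [Set.inter_comm]
    _ = ∫⁻ x in S, f x := lintegral_inter_add_diff f S hBmeas
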